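/- Let λ > 0. The infimum of f(A, u) + λ‖u‖_A² over all pairs (A, u), where A is a generalized Mahalanobis operator on H and u ∈ H, equals the infimum of f_V(B, u) + λ‖u‖_B² over all pairs (B, u), where B is a generalized Mahalanobis operator on V and u ∈ V. -/

import Mathlib

open scoped RealInnerProductSpace

/-- A continuous linear operator on a real inner product space is a *generalized Mahalanobis
operator* if it is self-adjoint and positive definite. -/
def IsGenMahalanobis {H : Type*} [NormedAddCommGroup H] [InnerProductSpace ℝ H]
    (A : H →L[ℝ] H) : Prop :=
  (∀ x y : H, ⟪A x, y⟫ = ⟪x, A y⟫) ∧ ∀ x : H, x ≠ 0 → 0 < ⟪A x, x⟫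

/-- A linear operator on a (subspace viewed as an) inner product space is a *generalized
Mahalanobis operator* if it is self-adjoint and positive definite. -/
def IsGenMahalanobisLin {V : Type*} [NormedAddCommGroup V] [InnerProductSpace ℝ V]
    (B : V →ₗ[ℝ] V) : Prop :=
  (∀ x y : V, ⟪B x, y⟫ = ⟪x, B y⟫) ∧ ∀ x : V, x ≠ 0 → 0 < ⟪B x, x⟫

/-- The paired-comparison empirical objective
`f(A, u) = Σ_i ℓ (sgn (‖z^i_1 - u‖_A² - ‖z^i_2 - u‖_A²)) (y i)`,
where `‖x‖_A² = ⟪A x, x⟫`. -/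
noncomputable def pairObj {H : Type*} [NormedAddCommGroup H] [InnerProductSpace ℝ H]
    {n : ℕ} (ℓ : ℝ → ℝ → ℝ) (z₁ z₂ : Fin n → H) (y : Fin n → ℝ)
    (A : H → H) (u : H) : ℝ :=
  ∑ i, ℓ (Real.sign (⟪A (z₁ i - u), z₁ i - u⟫ - ⟪A (z₂ i - u), z₂ i - u⟫)) (y i)

/-- Positivity of the real inner product of a nonzero vector with itself. -/
lemma real_inner_self_pos' {F : Type*} [NormedAddCommGroup F] [InnerProductSpace ℝ F]
    {x : F} (hx : x ≠ 0) : (0:ℝ) < ⟪x, x⟫ := by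
  rw [real_inner_self_eq_norm_sq]
  exact pow_pos (norm_pos_iff.mpr hx) 2

/-- Minimum possible value of the loss over the finitely many attainable argument pairs. -/
noncomputable def lossMin (ℓ : ℝ → ℝ → ℝ) : ℝ :=
  min (min (ℓ 1 1) (ℓ 1 (-1)))
    (min (min (ℓ 0 1) (ℓ 0 (-1))) (min (ℓ (-1) 1) (ℓ (-1) (-1))))

lemma lossMin_le (ℓ : ℝ → ℝ → ℝ) (t s : ℝ) (hs : s = 1 ∨ s = -1) :
    lossMin ℓ ≤ ℓ (Real.sign t) s := by
  rcases Real.sign_apply_eq t with h | h | h <;> rw [h] <;>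
    rcases hs with hs | hs <;> subst hs <;> simp [lossMin, min_le_iff]

lemma pairObj_ge {E : Type*} [NormedAddCommGroup E] [InnerProductSpace ℝ E]
    {n : ℕ} (ℓ : ℝ → ℝ → ℝ) (z₁ z₂ : Fin n → E) (y : Fin n → ℝ)
    (hy : ∀ i, y i = 1 ∨ y i = -1) (A : E → E) (u : E) :
    (n : ℝ) * lossMin ℓ ≤ pairObj ℓ z₁ z₂ y A u := by
  unfold pairObj
  calc (n : ℝ) * lossMin ℓ = ∑ _i : Fin n, lossMin ℓ := by
        simp [Finset.sum_const, nsmul_eq_mul]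
    _ ≤ _ := Finset.sum_le_sum fun i _ => lossMin_le ℓ _ _ (hy i)

/-- Extension of a generalized Mahalanobis operator from a finite-dimensional subspace
to the whole space (identity on the orthogonal complement). -/
lemma exists_mahalanobis_extension {H : Type*} [NormedAddCommGroup H] [InnerProductSpace ℝ H]
    [CompleteSpace H] (V : Submodule ℝ H) [FiniteDimensional ℝ V]
    (B : V →ₗ[ℝ] V) (hB : IsGenMahalanobisLin B) :
    ∃ A : H →L[ℝ] H, IsGenMahalanobis A ∧ ∀ w : V, ⟪A (w : H), (w : H)⟫ = ⟪B w, w⟫ := by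
  have hAx : ∀ x : H,
      (V.subtypeL.comp ((LinearMap.toContinuousLinearMap B).comp (V.orthogonalProjectionOnto)) +
        (ContinuousLinearMap.id ℝ H - V.subtypeL.comp (V.orthogonalProjectionOnto))) x
      = ((B (V.orthogonalProjectionOnto x) : H)) + (x - ((V.orthogonalProjectionOnto x : V) : H)) := by
    intro x
    simp [ContinuousLinearMap.add_apply, ContinuousLinearMap.sub_apply,
      ContinuousLinearMap.comp_apply, Submodule.subtypeL_apply,
      LinearMap.coe_toContinuousLinearMap']
  have hinner : ∀ x w : H,
      ⟪(V.subtypeL.comp ((LinearMap.toContinuousLinearMap B).comp (V.orthogonalProjectionOnto)) +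
        (ContinuousLinearMap.id ℝ H - V.subtypeL.comp (V.orthogonalProjectionOnto))) x, w⟫
      = ⟪B (V.orthogonalProjectionOnto x), V.orthogonalProjectionOnto w⟫ +
        ⟪x - ((V.orthogonalProjectionOnto x : V) : H), w - ((V.orthogonalProjectionOnto w : V) : H)⟫ := by
    intro x w
    rw [hAx, inner_add_left]
    congr 1
    · exact (Submodule.inner_orthogonalProjectionOnto_eq_of_mem_left (K := V)
        (B (V.orthogonalProjectionOnto x)) w).symm
    · have h0 : ⟪x - ((V.orthogonalProjectionOnto x : V) : H),
          ((V.orthogonalProjectionOnto w : V) : H)⟫ = 0 :=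
        Submodule.starProjection_inner_eq_zero x _ (Submodule.coe_mem _)
      rw [inner_sub_right, h0, sub_zero]
  refine ⟨V.subtypeL.comp ((LinearMap.toContinuousLinearMap B).comp (V.orthogonalProjectionOnto)) +
      (ContinuousLinearMap.id ℝ H - V.subtypeL.comp (V.orthogonalProjectionOnto)), ⟨?_, ?_⟩, ?_⟩
  · intro x w
    conv_rhs => rw [real_inner_comm]
    rw [hinner x w, hinner w x, hB.1,
      real_inner_comm (B (V.orthogonalProjectionOnto w)) (V.orthogonalProjectionOnto x),
      real_inner_comm (w - ((V.orthogonalProjectionOnto w : V) : H))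
        (x - ((V.orthogonalProjectionOnto x : V) : H))]
  · intro x hx
    rw [hinner]
    rcases eq_or_ne (V.orthogonalProjectionOnto x) 0 with h0 | h0
    · simp only [h0, map_zero, inner_zero_left, zero_add, ZeroMemClass.coe_zero, sub_zero]
      exact real_inner_self_pos' hx
    · have h1 := hB.2 _ h0
      have h2 : (0:ℝ) ≤ ⟪x - ((V.orthogonalProjectionOnto x : V) : H),
          x - ((V.orthogonalProjectionOnto x : V) : H)⟫ := real_inner_self_nonneg
      linarith
  · intro w
    rw [hinner, Submodule.orthogonalProjectionOnto_mem_subspace_eq_self]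
    simp

/-- Restriction of a generalized Mahalanobis operator to a finite-dimensional subspace,
with the `A`-orthogonal projection of the base point. -/
lemma exists_mahalanobis_restriction {H : Type*} [NormedAddCommGroup H] [InnerProductSpace ℝ H]
    [CompleteSpace H] (V : Submodule ℝ H) [FiniteDimensional ℝ V]
    (A : H →L[ℝ] H) (hA : IsGenMahalanobis A) (u : H) :
    ∃ (B : V →ₗ[ℝ] V) (v : V), IsGenMahalanobisLin B ∧
      (∀ w : V, ⟪A ((w : H) - u), (w : H) - u⟫
        = ⟪B (w - v), w - v⟫ + ⟪A (u - (v : H)), u - (v : H)⟫) ∧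
      ⟪A u, u⟫ = ⟪B v, v⟫ + ⟪A (u - (v : H)), u - (v : H)⟫ := by
  have expand_sub : ∀ a b : H, ⟪A (a - b), a - b⟫
      = ⟪A a, a⟫ - ⟪A a, b⟫ - ⟪A b, a⟫ + ⟪A b, b⟫ := by
    intro a b
    rw [map_sub, inner_sub_left, inner_sub_right, inner_sub_right]; ring
  have expand_add : ∀ a b : H, ⟪A (a + b), a + b⟫
      = ⟪A a, a⟫ + ⟪A a, b⟫ + ⟪A b, a⟫ + ⟪A b, b⟫ := by
    intro a b
    rw [map_add, inner_add_left, inner_add_right, inner_add_right]; ring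
  set B : V →ₗ[ℝ] V :=
    ((V.orthogonalProjectionOnto).toLinearMap.comp A.toLinearMap).comp V.subtype with hBdef
  have hBapp : ∀ x : V, B x = V.orthogonalProjectionOnto (A (x : H)) := fun x => rfl
  have hBA : ∀ x w : V, ⟪B x, w⟫ = ⟪A (x : H), (w : H)⟫ := by
    intro x w
    rw [hBapp]
    exact Submodule.inner_orthogonalProjectionOnto_eq_of_mem_right (K := V) w (A (x : H))
  have hGB : IsGenMahalanobisLin B := by
    constructor
    · intro x w
      conv_rhs => rw [real_inner_comm]
      rw [hBA x w, hBA w x, hA.1 ((w : H)) ((x : H))]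
      exact real_inner_comm _ _
    · intro x hx
      have hx' : (x : H) ≠ 0 := by simpa using hx
      rw [hBA]
      exact hA.2 _ hx'
  have hinj : Function.Injective B := by
    refine (injective_iff_map_eq_zero B).mpr fun a ha => ?_
    by_contra hne
    have h1 := hGB.2 a hne
    rw [ha] at h1
    simp at h1
  obtain ⟨v, hv⟩ := LinearMap.injective_iff_surjective.mp hinj (V.orthogonalProjectionOnto (A u))
  have horth : ∀ w : V, ⟪A (u - (v : H)), (w : H)⟫ = 0 := by
    intro w
    have h1 : ⟪A u, (w : H)⟫ = ⟪B v, w⟫ := by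
      rw [hv]
      exact (Submodule.inner_orthogonalProjectionOnto_eq_of_mem_right (K := V) w (A u)).symm
    have h2 : ⟪A (v : H), (w : H)⟫ = ⟪B v, w⟫ := (hBA v w).symm
    rw [map_sub, inner_sub_left, h1, h2, sub_self]
  refine ⟨B, v, hGB, ?_, ?_⟩
  · intro w
    have key : (w : H) - u = ((w - v : V) : H) - (u - (v : H)) := by
      have h : ((w - v : V) : H) = (w : H) - (v : H) := by push_cast; ring
      rw [h]; abel
    have e1 : ⟪A (u - (v : H)), ((w - v : V) : H)⟫ = 0 := horth _
    have e2 : ⟪A ((w - v : V) : H), u - (v : H)⟫ = 0 := by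
      rw [hA.1]
      rw [real_inner_comm (A (u - (v : H))) ((w - v : V) : H)]
      exact horth _
    have e3 : ⟪A ((w - v : V) : H), ((w - v : V) : H)⟫ = ⟪B (w - v), w - v⟫ := (hBA _ _).symm
    rw [key, expand_sub, e1, e2, e3]; ring
  · have hu : u = (v : H) + (u - (v : H)) := by abel
    have e1 : ⟪A (u - (v : H)), ((v : V) : H)⟫ = 0 := horth v
    have e2 : ⟪A ((v : V) : H), u - (v : H)⟫ = 0 := by
      rw [hA.1]
      rw [real_inner_comm (A (u - (v : H))) ((v : V) : H)]
      exact horth _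
    have e3 : ⟪A ((v : V) : H), ((v : V) : H)⟫ = ⟪B v, v⟫ := (hBA v v).symm
    conv_lhs => rw [hu]
    rw [expand_add, e1, e2, e3]; ring

/-- For `λ > 0`, the infimum of the regularized paired-comparison objective
`f(A, u) + λ‖u‖_A²` over generalized Mahalanobis operators on `H` and points of `H` equals
the infimum of `f_V(B, u) + λ‖u‖_B²` over generalized Mahalanobis operators on `V` and
points of `V`. -/
theorem regularized_infimum_eq_subspace_infimum
    {H : Type*} [NormedAddCommGroup H] [InnerProductSpace ℝ H] [CompleteSpace H]
    (V : Submodule ℝ H) [FiniteDimensional ℝ V]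
    {n : ℕ} (ℓ : ℝ → ℝ → ℝ) (z₁ z₂ : Fin n → H) (y : Fin n → ℝ)
    (hz₁ : ∀ i, z₁ i ∈ V) (hz₂ : ∀ i, z₂ i ∈ V)
    (hy : ∀ i, y i = 1 ∨ y i = -1)
    (lam : ℝ) (hlam : 0 < lam) :
    sInf {r : ℝ | ∃ (A : H →L[ℝ] H) (u : H), IsGenMahalanobis A ∧
        r = pairObj ℓ z₁ z₂ y ⇑A u + lam * ⟪A u, u⟫} =
      sInf {r : ℝ | ∃ (B : V →ₗ[ℝ] V) (u : V), IsGenMahalanobisLin B ∧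
        r = pairObj ℓ (fun i => (⟨z₁ i, hz₁ i⟩ : V)) (fun i => (⟨z₂ i, hz₂ i⟩ : V)) y ⇑B u +
          lam * ⟪B u, u⟫} := by
  classical
  set SH : Set ℝ := {r : ℝ | ∃ (A : H →L[ℝ] H) (u : H), IsGenMahalanobis A ∧
      r = pairObj ℓ z₁ z₂ y ⇑A u + lam * ⟪A u, u⟫} with hSHdef
  set SV : Set ℝ := {r : ℝ | ∃ (B : V →ₗ[ℝ] V) (u : V), IsGenMahalanobisLin B ∧
      r = pairObj ℓ (fun i => (⟨z₁ i, hz₁ i⟩ : V)) (fun i => (⟨z₂ i, hz₂ i⟩ : V)) y ⇑B u +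
        lam * ⟪B u, u⟫} with hSVdef
  -- lower bounds
  have hbddH : ∀ r ∈ SH, (n : ℝ) * lossMin ℓ ≤ r := by
    rintro r ⟨A, u, hA, rfl⟩
    have h1 := pairObj_ge ℓ z₁ z₂ y hy ⇑A u
    have h2 : (0:ℝ) ≤ ⟪A u, u⟫ := by
      rcases eq_or_ne u 0 with h | h
      · simp [h]
      · exact (hA.2 u h).le
    nlinarith
  have hbddV : ∀ r ∈ SV, (n : ℝ) * lossMin ℓ ≤ r := by
    rintro r ⟨B, u, hB, rfl⟩
    have h1 := pairObj_ge ℓ (fun i => (⟨z₁ i, hz₁ i⟩ : V)) (fun i => (⟨z₂ i, hz₂ i⟩ : V)) y hy ⇑B u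
    have h2 : (0:ℝ) ≤ ⟪B u, u⟫ := by
      rcases eq_or_ne u 0 with h | h
      · simp [h]
      · exact (hB.2 u h).le
    nlinarith
  -- nonemptiness of SV
  have hSVne : SV.Nonempty := by
    refine ⟨_, LinearMap.id, 0, ⟨fun x w => by simp, fun x hx => ?_⟩, rfl⟩
    simpa using real_inner_self_pos' hx
  -- SV ⊆ SH via the extension lemma
  have hsub : SV ⊆ SH := by
    rintro r ⟨B, v, hB, rfl⟩
    obtain ⟨A, hGA, hAV⟩ := exists_mahalanobis_extension V B hB
    refine ⟨A, (v : H), hGA, ?_⟩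
    have hpair : pairObj ℓ z₁ z₂ y ⇑A (v : H)
        = pairObj ℓ (fun i => (⟨z₁ i, hz₁ i⟩ : V)) (fun i => (⟨z₂ i, hz₂ i⟩ : V)) y ⇑B v := by
      unfold pairObj
      refine Finset.sum_congr rfl fun i _ => ?_
      have e₁ : z₁ i - (v : H) = ((⟨z₁ i, hz₁ i⟩ - v : V) : H) := by push_cast; ring
      have e₂ : z₂ i - (v : H) = ((⟨z₂ i, hz₂ i⟩ - v : V) : H) := by push_cast; ring
      rw [e₁, e₂, hAV, hAV]
    rw [hpair, hAV v]
  -- every element of SH is dominated by an element of SV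
  have hproj : ∀ r ∈ SH, ∃ r' ∈ SV, r' ≤ r := by
    rintro r ⟨A, u, hA, rfl⟩
    obtain ⟨B, v, hGB, hquad, hreg⟩ := exists_mahalanobis_restriction V A hA u
    have hnn : (0:ℝ) ≤ ⟪A (u - (v : H)), u - (v : H)⟫ := by
      rcases eq_or_ne (u - (v : H)) 0 with h | h
      · simp [h]
      · exact (hA.2 _ h).le
    have hpair : pairObj ℓ z₁ z₂ y ⇑A u
        = pairObj ℓ (fun i => (⟨z₁ i, hz₁ i⟩ : V)) (fun i => (⟨z₂ i, hz₂ i⟩ : V)) y ⇑B v := by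
      unfold pairObj
      refine Finset.sum_congr rfl fun i _ => ?_
      have h₁ := hquad ⟨z₁ i, hz₁ i⟩
      have h₂ := hquad ⟨z₂ i, hz₂ i⟩
      have key : ⟪A (z₁ i - u), z₁ i - u⟫ - ⟪A (z₂ i - u), z₂ i - u⟫
          = ⟪B ((⟨z₁ i, hz₁ i⟩ : V) - v), (⟨z₁ i, hz₁ i⟩ : V) - v⟫
            - ⟪B ((⟨z₂ i, hz₂ i⟩ : V) - v), (⟨z₂ i, hz₂ i⟩ : V) - v⟫ := by
        rw [show z₁ i - u = ((⟨z₁ i, hz₁ i⟩ : V) : H) - u from rfl,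
          show z₂ i - u = ((⟨z₂ i, hz₂ i⟩ : V) : H) - u from rfl, h₁, h₂]
        ring
      rw [key]
    refine ⟨_, ⟨B, v, hGB, rfl⟩, ?_⟩
    rw [← hpair]
    have hle : ⟪B v, v⟫ ≤ ⟪A u, u⟫ := by rw [hreg]; linarith
    nlinarith
  have hSHne : SH.Nonempty := hSVne.mono hsub
  apply le_antisymm
  · exact csInf_le_csInf ⟨_, hbddH⟩ hSVne hsub
  · refine le_csInf hSHne fun r hr => ?_
    obtain ⟨r', hr', hle⟩ := hproj r hr
    exact (csInf_le ⟨_, hbddV⟩ hr').trans hle
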